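/- For all L, M ∈ 𝐋, the matrix (MᵀL)_{t,t} is positive definite for every t = 1,…,T if and only if 𝐎*(L,M) = {Id}, i.e., the identity matrix is the unique optimizer. -/

import Mathlib

open Matrix Filter Topology
set_option linter.unusedSectionVars false
set_option maxHeartbeats 1000000
set_option linter.unusedSectionVars false
set_option maxHeartbeats 1000000

section scalar
variable {n : Type*} [Fintype n] [DecidableEq n]

lemma trace_tmul (B A : Matrix n n ℝ) :
    trace (Bᵀ * A) = ∑ p, ∑ q, B q p * A q p := by
  simp only [Matrix.trace, Matrix.diag, Matrix.mul_apply, Matrix.transpose_apply]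

lemma stdBasisMatrix_transpose' (i j : n) (c : ℝ) :
    (Matrix.single i j c)ᵀ = Matrix.single j i c := by
  ext a b
  simp [Matrix.single, and_comm]

lemma trace_std_mul (a b : n) (A : Matrix n n ℝ) :
    trace (Matrix.single a b (1:ℝ) * A) = A b a := by
  simp [Matrix.trace, Matrix.diag, Matrix.mul_apply, Matrix.single, ite_and,
    Finset.sum_ite_eq, Finset.sum_ite_eq']

lemma rowvec_quad (C A : Matrix n n ℝ) (i : n) :
    (C * A * Cᵀ) i i = (C i) ⬝ᵥ A *ᵥ (C i) := by
  simp only [Matrix.mul_apply, Matrix.transpose_apply, dotProduct, Matrix.mulVec,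
    Finset.sum_mul, Finset.mul_sum]
  rw [Finset.sum_comm]
  exact Finset.sum_congr rfl fun _ _ => Finset.sum_congr rfl fun _ _ => by ring

/-- Forward scalar lemma: if `A` is positive definite and `Q` orthogonal then
`trace ((1-Q)ᵀ A) ≥ 0`, with equality only at `Q = 1`. -/
lemma fwd_scalar {A Q : Matrix n n ℝ} (hA : A.PosDef) (hQ : Qᵀ * Q = 1) :
    0 ≤ trace ((1 - Q)ᵀ * A) ∧ (trace ((1 - Q)ᵀ * A) = 0 → Q = 1) := by
  have hsym : Aᵀ = A := by
    have := hA.1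
    rwa [Matrix.IsHermitian, conjTranspose_eq_transpose_of_trivial] at this
  have hQA : trace (Q * A) = trace (Qᵀ * A) := by
    calc trace (Q * A) = trace ((Q * A)ᵀ) := (trace_transpose _).symm
    _ = trace (Aᵀ * Qᵀ) := by rw [transpose_mul]
    _ = trace (A * Qᵀ) := by rw [hsym]
    _ = trace (Qᵀ * A) := trace_mul_comm _ _
  have h2 : trace ((1 - Q)ᵀ * ((1 - Q) * A)) = 2 * trace ((1 - Q)ᵀ * A) := by
    have e1 : (1 - Q)ᵀ * ((1 - Q) * A) = A - Q * A - Qᵀ * A + Qᵀ * (Q * A) := by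
      simp only [transpose_sub, transpose_one, sub_mul, one_mul, mul_sub]
      abel
    have e2 : Qᵀ * (Q * A) = A := by rw [← Matrix.mul_assoc, hQ, one_mul]
    rw [e1, e2]
    simp only [trace_add, trace_sub, transpose_sub, transpose_one, sub_mul, one_mul,
      trace_sub]
    rw [hQA]; ring
  have h3 : trace ((1 - Q)ᵀ * ((1 - Q) * A)) = ∑ i, ((1-Q) i) ⬝ᵥ A *ᵥ ((1-Q) i) := by
    rw [trace_mul_comm ((1-Q)ᵀ) ((1-Q)*A)]
    rw [Matrix.trace]
    exact Finset.sum_congr rfl fun i _ => rowvec_quad (1-Q) A i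
  have hterm : ∀ i, 0 ≤ ((1-Q) i) ⬝ᵥ A *ᵥ ((1-Q) i) := by
    intro i
    have := (posSemidef_iff_dotProduct_mulVec.mp hA.posSemidef).2 ((1-Q) i)
    simpa using this
  constructor
  · have : 0 ≤ trace ((1 - Q)ᵀ * ((1 - Q) * A)) := by
      rw [h3]; exact Finset.sum_nonneg fun i _ => hterm i
    linarith [h2 ▸ this]
  · intro h0
    have hz : ∑ i, ((1-Q) i) ⬝ᵥ A *ᵥ ((1-Q) i) = 0 := by
      rw [← h3, h2, h0]; ring
    have hzz : ∀ i ∈ Finset.univ, ((1-Q) i) ⬝ᵥ A *ᵥ ((1-Q) i) = 0 :=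
      (Finset.sum_eq_zero_iff_of_nonneg (fun i _ => hterm i)).mp hz
    have hrow : ∀ i, (1-Q) i = 0 := by
      intro i
      by_contra hne
      have := hA.dotProduct_mulVec_pos (x := (1-Q) i) hne
      rw [star_trivial] at this
      exact absurd (hzz i (Finset.mem_univ i)) (ne_of_gt this)
    have : (1 - Q : Matrix n n ℝ) = 0 := by
      ext a b; exact congrFun (hrow a) b
    have := sub_eq_zero.mp this
    exact this.symm

lemma quad_zero {a D : ℝ} (h : ∀ u : ℝ, 0 ≤ a * u^2 + D * u) : D = 0 := by
  have hD2 : D^2 ≤ 0 := by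
    rcases le_or_gt a 0 with ha | ha
    · nlinarith [h (-D), sq_nonneg D]
    · have h1 := h (-D / (2*a))
      have ha' : a ≠ 0 := ne_of_gt ha
      have he : a * (-D/(2*a))^2 + D * (-D/(2*a)) = -D^2/(4*a) := by
        field_simp; ring
      have h5 : 0 ≤ -D^2/(4*a) := he ▸ h1
      have h6 : 0 ≤ -D^2 := by
        have := mul_nonneg h5 (le_of_lt (by positivity : (0:ℝ) < 4*a))
        rwa [div_mul_cancel₀ _ (by positivity : (4:ℝ)*a ≠ 0)] at this
      linarith
  nlinarith [sq_nonneg D]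

end scalar

section rot
variable {n : Type*} [Fintype n] [DecidableEq n]

lemma rot_aux (P K : Matrix n n ℝ) (c s : ℝ) (h : c^2 + s^2 = 1)
    (hPP : P * P = P) (hKK : K * K = -P) (hPK : P * K = K) (hKP : K * P = K) :
    (1 + (c-1) • P - s • K) * (1 + (c-1) • P + s • K) = 1 := by
  have expand : (1 + (c-1) • P - s • K) * (1 + (c-1) • P + s • K)
      = 1 + (2*(c-1) + (c-1)*(c-1) + s*s) • P := by
    simp only [add_mul, mul_add, sub_mul, mul_sub, one_mul, mul_one,
      smul_mul_assoc, mul_smul_comm, hPP, hKK, hPK, hKP, smul_smul, smul_neg]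
    module
  rw [expand, show 2*(c-1) + (c-1)*(c-1) + s*s = 0 by nlinarith [h], zero_smul, add_zero]

/-- Rotation-type matrix in the `(i,j)` plane. -/
noncomputable def rotM (i j : n) (c s : ℝ) : Matrix n n ℝ :=
  1 + (c-1) • (Matrix.single i i (1:ℝ) + Matrix.single j j 1)
    + s • (Matrix.single j i (1:ℝ) - Matrix.single i j 1)

lemma rotM_transpose (i j : n) (hij : i ≠ j) (c s : ℝ) :
    (rotM i j c s)ᵀ = 1 + (c-1) • (Matrix.single i i (1:ℝ) + Matrix.single j j 1)
      - s • (Matrix.single j i (1:ℝ) - Matrix.single i j 1) := by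
  simp only [rotM, transpose_add, transpose_sub, transpose_smul, transpose_one,
    stdBasisMatrix_transpose']
  module

lemma rotM_orth (i j : n) (hij : i ≠ j) (c s : ℝ) (h : c^2 + s^2 = 1) :
    (rotM i j c s)ᵀ * rotM i j c s = 1 := by
  have hPP : (Matrix.single i i (1:ℝ) + Matrix.single j j 1)
      * (Matrix.single i i (1:ℝ) + Matrix.single j j 1)
      = Matrix.single i i (1:ℝ) + Matrix.single j j 1 := by
    simp [add_mul, mul_add, Matrix.single_mul_single_same,
      Matrix.single_mul_single_of_ne, hij, hij.symm]
  have hKK : (Matrix.single j i (1:ℝ) - Matrix.single i j 1)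
      * (Matrix.single j i (1:ℝ) - Matrix.single i j 1)
      = -(Matrix.single i i (1:ℝ) + Matrix.single j j 1) := by
    simp [sub_mul, mul_sub, Matrix.single_mul_single_same,
      Matrix.single_mul_single_of_ne, hij, hij.symm]
    abel
  have hPK : (Matrix.single i i (1:ℝ) + Matrix.single j j 1)
      * (Matrix.single j i (1:ℝ) - Matrix.single i j 1)
      = Matrix.single j i (1:ℝ) - Matrix.single i j 1 := by
    simp [add_mul, mul_add, mul_sub, Matrix.single_mul_single_same,
      Matrix.single_mul_single_of_ne, hij, hij.symm]
  have hKP : (Matrix.single j i (1:ℝ) - Matrix.single i j 1)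
      * (Matrix.single i i (1:ℝ) + Matrix.single j j 1)
      = Matrix.single j i (1:ℝ) - Matrix.single i j 1 := by
    simp [add_mul, mul_add, sub_mul, Matrix.single_mul_single_same,
      Matrix.single_mul_single_of_ne, hij, hij.symm]
    abel
  rw [rotM_transpose i j hij, rotM]
  exact rot_aux _ _ c s h hPP hKK hPK hKP

lemma rotM_trace (i j : n) (hij : i ≠ j) (c s : ℝ) (A : Matrix n n ℝ) :
    trace ((1 - rotM i j c s)ᵀ * A)
      = (1-c) * (A i i + A j j) + s * (A i j - A j i) := by
  have e1 : (1 - rotM i j c s)ᵀ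
      = (1-c) • (Matrix.single i i (1:ℝ) + Matrix.single j j 1)
        + s • (Matrix.single j i (1:ℝ) - Matrix.single i j 1) := by
    simp only [transpose_sub, transpose_one, rotM_transpose i j hij]
    module
  rw [e1]
  simp only [add_mul, smul_mul_assoc, Matrix.sub_mul, Matrix.add_mul, trace_add, trace_smul,
    trace_sub, trace_std_mul, smul_eq_mul]

end rot

section reverse
variable {n : Type*} [Fintype n] [DecidableEq n]

lemma vecMulVec_transpose' (u : n → ℝ) : (vecMulVec u u)ᵀ = vecMulVec u u := by
  ext a b; simp [vecMulVec_apply, mul_comm]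

lemma vecMulVec_sq (u : n → ℝ) :
    vecMulVec u u * vecMulVec u u = (u ⬝ᵥ u) • vecMulVec u u := by
  ext a b
  simp only [Matrix.mul_apply, vecMulVec_apply, Matrix.smul_apply, dotProduct,
    smul_eq_mul, Finset.sum_mul]
  exact Finset.sum_congr rfl fun _ _ => by ring

lemma trace_vecMulVec_mul (u : n → ℝ) (A : Matrix n n ℝ) :
    trace (vecMulVec u u * A) = u ⬝ᵥ A *ᵥ u := by
  simp only [Matrix.trace, Matrix.diag, Matrix.mul_apply, vecMulVec_apply, dotProduct,
    Matrix.mulVec, Finset.mul_sum]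
  rw [Finset.sum_comm]
  exact Finset.sum_congr rfl fun _ _ => Finset.sum_congr rfl fun _ _ => by ring

lemma dotProduct_self_nonneg' (u : n → ℝ) : 0 ≤ u ⬝ᵥ u :=
  Finset.sum_nonneg fun i _ => mul_self_nonneg (u i)

/-- Reverse scalar lemma: if the identity is the unique minimizer then `A` is
positive definite. -/
lemma rev_scalar (A : Matrix n n ℝ)
    (hge : ∀ Q : Matrix n n ℝ, Qᵀ * Q = 1 → 0 ≤ trace ((1 - Q)ᵀ * A))
    (heq : ∀ Q : Matrix n n ℝ, Qᵀ * Q = 1 → trace ((1 - Q)ᵀ * A) = 0 → Q = 1) :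
    A.PosDef := by
  -- quadratic form is positive on nonzero vectors
  have hquad : ∀ u : n → ℝ, u ≠ 0 → 0 < u ⬝ᵥ A *ᵥ u := by
    intro u hu
    have hn0 : 0 < u ⬝ᵥ u :=
      lt_of_le_of_ne (dotProduct_self_nonneg' u)
        (fun h => hu ((dotProduct_self_eq_zero).mp h.symm))
    set a : ℝ := 2 / (u ⬝ᵥ u) with ha
    have hapos : 0 < a := by positivity
    set Q : Matrix n n ℝ := 1 - a • vecMulVec u u with hQdef
    have hQt : Qᵀ = Q := by
      rw [hQdef, transpose_sub, transpose_smul, transpose_one, vecMulVec_transpose']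
    have hQorth : Qᵀ * Q = 1 := by
      rw [hQt, hQdef]
      have expand : (1 - a • vecMulVec u u) * (1 - a • vecMulVec u u)
          = 1 + (-a + -a + a * (a * (u ⬝ᵥ u))) • vecMulVec u u := by
        simp only [sub_mul, mul_sub, one_mul, mul_one, smul_mul_assoc, mul_smul_comm,
          vecMulVec_sq, smul_smul]
        module
      rw [expand, show -a + -a + a * (a * (u ⬝ᵥ u)) = 0 by
        rw [ha]; field_simp; ring, zero_smul, add_zero]
    have htr : trace ((1 - Q)ᵀ * A) = a * (u ⬝ᵥ A *ᵥ u) := by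
      have e1 : (1 - Q) = a • vecMulVec u u := by rw [hQdef]; module
      rw [e1, transpose_smul, vecMulVec_transpose', smul_mul_assoc, trace_smul,
        trace_vecMulVec_mul, smul_eq_mul]
    have hge' := hge Q hQorth
    rw [htr] at hge'
    have hqf : 0 ≤ u ⬝ᵥ A *ᵥ u := nonneg_of_mul_nonneg_right hge' hapos
    rcases lt_or_eq_of_le hqf with h | h
    · exact h
    · exfalso
      have h0 : trace ((1 - Q)ᵀ * A) = 0 := by rw [htr, ← h, mul_zero]
      have hQ1 : Q = 1 := heq Q hQorth h0
      have hV : a • vecMulVec u u = 0 := by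
        have : (1 : Matrix n n ℝ) - a • vecMulVec u u = 1 := hQdef ▸ hQ1
        linear_combination (norm := module) -this
      have hVz : vecMulVec u u = 0 := by
        rcases smul_eq_zero.mp hV with h' | h'
        · exact absurd h' (ne_of_gt hapos)
        · exact h'
      apply hu
      funext i
      have := congrFun (congrFun hVz i) i
      rw [vecMulVec_apply] at this
      exact mul_self_eq_zero.mp this
  -- symmetry
  have hsym : ∀ p q : n, A p q = A q p := by
    intro p q
    rcases eq_or_ne p q with rfl | hpq
    · rfl
    · have key : ∀ u : ℝ, 0 ≤ (A p p + A q q) * u^2 + (A p q - A q p) * u := by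
        intro u
        have hden : (0:ℝ) < 1 + u^2 := by positivity
        set c : ℝ := (1 - u^2) / (1 + u^2)
        set s : ℝ := 2 * u / (1 + u^2)
        have hcs : c^2 + s^2 = 1 := by
          simp only [c, s]; field_simp
          ring
        have h1 := hge _ (rotM_orth p q hpq c s hcs)
        rw [rotM_trace p q hpq c s A] at h1
        have h1c : 1 - c = 2 * u^2 / (1 + u^2) := by simp only [c]; field_simp; ring
        rw [h1c] at h1
        have := mul_nonneg h1 (le_of_lt (by linarith : (0:ℝ) < (1 + u^2) / 2))
        have e : (2 * u^2 / (1 + u^2) * (A p p + A q q) + s * (A p q - A q p))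
            * ((1 + u^2) / 2)
            = (A p p + A q q) * u^2 + (A p q - A q p) * u := by
          simp only [s]; field_simp
        rwa [e] at this
      have := quad_zero key
      linarith
  refine posDef_iff_dotProduct_mulVec.mpr ⟨?_, ?_⟩
  · ext p q
    rw [conjTranspose_apply, star_trivial]
    exact hsym q p
  · intro x hx
    have := hquad x hx
    rwa [show star x = x from funext fun i => star_trivial (x i)]

end reverse


/-- Square matrices of size `dT × dT`, indexed by blocks: index `(t, i)` is
row/column `i` within block `t`. -/
abbrev Mat (d T : ℕ) := Matrix (Fin T × Fin d) (Fin T × Fin d) ℝ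

/-- The `t`-th diagonal `d × d` block of a `dT × dT` matrix. -/
def blk {d T : ℕ} (A : Mat d T) (t : Fin T) : Matrix (Fin d) (Fin d) ℝ :=
  fun i j => A (t, i) (t, j)

/-- The `t`-th block column of a `dT × dT` matrix, a `dT × d` matrix. -/
def colBlk {d T : ℕ} (A : Mat d T) (t : Fin T) : Matrix (Fin T × Fin d) (Fin d) ℝ :=
  fun p j => A p (t, j)

/-- Membership in `𝐋`: block lower triangular matrices. -/
def memL {d T : ℕ} (A : Mat d T) : Prop :=
  ∀ (t s : Fin T) (i j : Fin d), t < s → A (t, i) (s, j) = 0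

/-- Membership in `𝐎`: block diagonal matrices with orthogonal `d × d` diagonal blocks
(equivalently: block diagonal and orthogonal). -/
def memO {d T : ℕ} (O : Mat d T) : Prop :=
  (∀ (t s : Fin T) (i j : Fin d), t ≠ s → O (t, i) (s, j) = 0) ∧ Oᵀ * O = 1

/-- The Frobenius norm of a real matrix. -/
noncomputable def frobNorm {m n : Type*} [Fintype m] [Fintype n] (A : Matrix m n ℝ) : ℝ :=
  Real.sqrt (∑ i, ∑ j, (A i j) ^ 2)

/-- The Frobenius inner product of two real matrices. -/
noncomputable def frobInner {m n : Type*} [Fintype m] [Fintype n] (A B : Matrix m n ℝ) : ℝ :=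
  ∑ i, ∑ j, A i j * B i j

/-- The adapted Bures–Wasserstein distance `d_ABW(L, M) = inf_{O ∈ 𝐎} ‖L - M O‖_F`. -/
noncomputable def dABW {d T : ℕ} (L M : Mat d T) : ℝ :=
  sInf {r : ℝ | ∃ O : Mat d T, memO O ∧ r = frobNorm (L - M * O)}

/-- The set `𝐎*(L, M)` of optimizers of `inf_{O ∈ 𝐎} ‖L - M O‖_F`. -/
noncomputable def OStar {d T : ℕ} (L M : Mat d T) : Set (Mat d T) :=
  {O | memO O ∧ frobNorm (L - M * O) = dABW L M}

/-- The set `𝐕(L) = {M P - L : M ∈ 𝐋, P ∈ 𝐎*(L, M)}`. -/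
noncomputable def VSet {d T : ℕ} (L : Mat d T) : Set (Mat d T) :=
  {V | ∃ M P : Mat d T, memL M ∧ P ∈ OStar L M ∧ V = M * P - L}

/-- The set `𝒱(L) = {V ∈ 𝐋 : (Vᵀ L)_{t,t} is symmetric for all t}`. -/
def calV {d T : ℕ} (L : Mat d T) : Set (Mat d T) :=
  {V | memL V ∧ ∀ t : Fin T, (blk (Vᵀ * L) t).IsSymm}

/-- The set `𝐋^reg = {L ∈ 𝐋 : (Lᵀ L)_{t,t} is positive definite for all t}`. -/
def LReg {d T : ℕ} : Set (Mat d T) :=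
  {L | memL L ∧ ∀ t : Fin T, (blk (Lᵀ * L) t).PosDef}

/-- The sum of the singular values of a real square matrix `A`,
i.e. the trace of the positive semidefinite square root of `Aᵀ A`. -/
noncomputable def svSum {n : ℕ} (A : Matrix (Fin n) (Fin n) ℝ) : ℝ :=
  (((Matrix.posSemidef_conjTranspose_mul_self A).1.eigenvectorUnitary : Matrix (Fin n) (Fin n) ℝ) *
    Matrix.diagonal (Real.sqrt ∘ (Matrix.posSemidef_conjTranspose_mul_self A).1.eigenvalues) *
    (star (Matrix.posSemidef_conjTranspose_mul_self A).1.eigenvectorUnitary :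
      Matrix (Fin n) (Fin n) ℝ)).trace

/-- The operator norm of a real matrix: the supremum of the euclidean norm `‖A x‖₂`
over the euclidean unit ball. -/
noncomputable def opNorm {m n : Type*} [Fintype m] [Fintype n] (A : Matrix m n ℝ) : ℝ :=
  sSup {r : ℝ | ∃ x : n → ℝ, (∑ j, (x j) ^ 2) ≤ 1 ∧ r = Real.sqrt (∑ i, (A.mulVec x i) ^ 2)}


section blocks
variable {d T : ℕ}

lemma memO_one : memO (1 : Mat d T) :=
  ⟨fun t s i j h => Matrix.one_apply_ne (by simp [Prod.ext_iff, h]), by simp⟩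

lemma blk_mul_self_orth {O : Mat d T} (hO : memO O) (t : Fin T) :
    (blk O t)ᵀ * blk O t = 1 := by
  ext i j
  have lhs : (Oᵀ * O) (t,i) (t,j) = ∑ k, O (t,k) (t,i) * O (t,k) (t,j) := by
    rw [Matrix.mul_apply, Fintype.sum_prod_type]
    rw [Finset.sum_eq_single t]
    · simp [Matrix.transpose_apply]
    · intro s _ hs
      apply Finset.sum_eq_zero
      intro k _
      rw [Matrix.transpose_apply, hO.1 s t k i hs, zero_mul]
    · exact fun h => absurd (Finset.mem_univ t) h
  have h := congrFun (congrFun hO.2 (t,i)) (t,j)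
  rw [lhs] at h
  rw [Matrix.mul_apply]
  simp only [Matrix.transpose_apply, blk]
  rw [h]
  simp [Matrix.one_apply, Prod.ext_iff]

lemma eq_one_of_blocks (O : Mat d T)
    (hbd : ∀ (t s : Fin T) (i j : Fin d), t ≠ s → O (t,i) (s,j) = 0)
    (hblk : ∀ t, blk O t = 1) : O = 1 := by
  ext ⟨t,i⟩ ⟨s,j⟩
  rcases eq_or_ne t s with rfl | hts
  · have h := congrFun (congrFun (hblk t) i) j
    simp only [blk] at h
    rw [h]
    simp [Matrix.one_apply, Prod.ext_iff]
  · rw [hbd t s i j hts, Matrix.one_apply_ne (by simp [Prod.ext_iff, hts])]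

lemma trace_blocks (O A : Mat d T)
    (hbd : ∀ (t s : Fin T) (i j : Fin d), t ≠ s → O (t,i) (s,j) = 0) :
    trace ((1 - O)ᵀ * A) = ∑ t, trace ((1 - blk O t)ᵀ * blk A t) := by
  rw [trace_tmul]
  calc ∑ p : Fin T × Fin d, ∑ q : Fin T × Fin d, (1-O) q p * A q p
      = ∑ t, ∑ i, ∑ s, ∑ k, (1-O) (s,k) (t,i) * A (s,k) (t,i) := by
        rw [Fintype.sum_prod_type]
        exact Finset.sum_congr rfl fun t _ => Finset.sum_congr rfl fun i _ =>
          Fintype.sum_prod_type _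
    _ = ∑ t, ∑ i, ∑ k, (1-O) (t,k) (t,i) * A (t,k) (t,i) := by
        refine Finset.sum_congr rfl fun t _ => Finset.sum_congr rfl fun i _ => ?_
        rw [Finset.sum_eq_single t]
        · intro s _ hs
          apply Finset.sum_eq_zero
          intro k _
          have h1 : (1 : Mat d T) (s,k) (t,i) = 0 :=
            Matrix.one_apply_ne (by simp [Prod.ext_iff, hs])
          simp [Matrix.sub_apply, h1, hbd s t k i hs]
        · exact fun h => absurd (Finset.mem_univ t) h
    _ = ∑ t, trace ((1 - blk O t)ᵀ * blk A t) := by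
        refine Finset.sum_congr rfl fun t _ => ?_
        rw [trace_tmul]
        refine Finset.sum_congr rfl fun i _ => Finset.sum_congr rfl fun k _ => ?_
        have h1 : (1 - blk O t) k i = (1 - O) (t,k) (t,i) := by
          simp [Matrix.sub_apply, blk, Matrix.one_apply, Prod.ext_iff]
        rw [h1]
        rfl

/-- Embed a `d × d` matrix as the `t₀`-th diagonal block, identity elsewhere. -/
def embQ (t₀ : Fin T) (Q : Matrix (Fin d) (Fin d) ℝ) : Mat d T :=
  fun p q => if p.1 = q.1 then
    (if p.1 = t₀ then Q p.2 q.2 else (if p.2 = q.2 then 1 else 0)) else 0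

lemma blk_embQ_same (t₀ : Fin T) (Q : Matrix (Fin d) (Fin d) ℝ) :
    blk (embQ t₀ Q) t₀ = Q := by
  ext i j; simp [blk, embQ]

lemma blk_embQ_ne (t₀ t : Fin T) (Q : Matrix (Fin d) (Fin d) ℝ) (h : t ≠ t₀) :
    blk (embQ t₀ Q) t = 1 := by
  ext i j; simp [blk, embQ, h, Matrix.one_apply]

lemma embQ_memO (t₀ : Fin T) (Q : Matrix (Fin d) (Fin d) ℝ) (hQ : Qᵀ * Q = 1) :
    memO (embQ t₀ Q) := by
  constructor
  · intro t s i j hts; simp [embQ, hts]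
  · ext ⟨t,i⟩ ⟨s,j⟩
    rw [Matrix.mul_apply, Fintype.sum_prod_type]
    rw [Finset.sum_eq_single t (fun v _ hv => Finset.sum_eq_zero fun k _ => by
          simp [Matrix.transpose_apply, embQ, hv])
        (fun h => absurd (Finset.mem_univ t) h)]
    rcases eq_or_ne t s with rfl | hts
    · rcases eq_or_ne t t₀ with rfl | ht0
      · have h' : ∑ k, Q k i * Q k j = if i = j then 1 else 0 := by
          simpa [Matrix.mul_apply, Matrix.one_apply] using congrFun (congrFun hQ i) j
        simp [Matrix.transpose_apply, embQ, Matrix.one_apply, Prod.ext_iff, h']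
      · simp [Matrix.transpose_apply, embQ, ht0, Matrix.one_apply, Prod.ext_iff, ite_and, eq_comm]
    · simp [Matrix.transpose_apply, embQ, hts, Matrix.one_apply, Prod.ext_iff]

lemma embQ_eq_one (t₀ : Fin T) (Q : Matrix (Fin d) (Fin d) ℝ)
    (h : embQ t₀ Q = 1) : Q = 1 := by
  ext i j
  have h1 := congrFun (congrFun h (t₀,i)) (t₀,j)
  simpa [embQ, Matrix.one_apply, Prod.ext_iff] using h1

end blocks

section expand
variable {d T : ℕ}

lemma sq_eq_trace {m : Type*} [Fintype m] [DecidableEq m] (X : Matrix m m ℝ) :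
    ∑ p, ∑ q, (X p q)^2 = trace (Xᵀ * X) := by
  rw [trace_tmul X X, Finset.sum_comm]
  exact Finset.sum_congr rfl fun _ _ => Finset.sum_congr rfl fun _ _ => sq _

lemma trace_transpose_mul_comm {m : Type*} [Fintype m] (X Y : Matrix m m ℝ) :
    trace (Xᵀ * Y) = trace (Yᵀ * X) := by
  calc trace (Xᵀ*Y) = trace ((Xᵀ*Y)ᵀ) := (trace_transpose _).symm
    _ = trace (Yᵀ * X) := by rw [transpose_mul, transpose_transpose]

lemma sq_expand (L M O : Mat d T) (hO : Oᵀ * O = 1) :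
    ∑ p, ∑ q, ((L - M * O) p q)^2
      = (∑ p, ∑ q, ((L - M) p q)^2) + 2 * trace ((1 - O)ᵀ * (Mᵀ * L)) := by
  have hO' : O * Oᵀ = 1 := mul_eq_one_comm.mp hO
  rw [sq_eq_trace, sq_eq_trace]
  have e1 : ∀ X Y : Mat d T, trace ((X - Y)ᵀ * (X - Y))
      = trace (Xᵀ*X) - 2*trace (Yᵀ*X) + trace (Yᵀ*Y) := by
    intro X Y
    simp only [transpose_sub, Matrix.sub_mul, Matrix.mul_sub, trace_sub]
    rw [trace_transpose_mul_comm X Y]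
    ring
  rw [e1, e1]
  have e2 : trace ((M*O)ᵀ * (M*O)) = trace (Mᵀ * M) := by
    calc trace ((M*O)ᵀ * (M*O)) = trace ((M * O) * (Oᵀ * Mᵀ)) := by
          rw [transpose_mul]; exact trace_mul_comm _ _
    _ = trace (M * (O * Oᵀ) * Mᵀ) := by noncomm_ring
    _ = trace (M * Mᵀ) := by rw [hO', mul_one]
    _ = trace (Mᵀ * M) := trace_mul_comm _ _
  have e3 : trace ((M*O)ᵀ * L) = trace (Oᵀ * (Mᵀ * L)) := by
    rw [transpose_mul, Matrix.mul_assoc]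
  have e4 : trace ((1 - O)ᵀ * (Mᵀ * L)) = trace (Mᵀ*L) - trace (Oᵀ*(Mᵀ*L)) := by
    simp [transpose_sub, Matrix.sub_mul, trace_sub]
  rw [e2, e3, e4]
  ring

lemma sum_sq_nonneg {m : Type*} [Fintype m] (X : Matrix m m ℝ) :
    0 ≤ ∑ p, ∑ q, (X p q)^2 :=
  Finset.sum_nonneg fun _ _ => Finset.sum_nonneg fun _ _ => sq_nonneg _

end expand

/-- `(MᵀL)_{t,t}` is positive definite for every `t` iff the identity is the
unique optimizer, `𝐎*(L,M) = {Id}`. -/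
theorem stmt8 (d T : ℕ) (hd : 0 < d) (hT : 0 < T) (L M : Mat d T)
    (hL : memL L) (hM : memL M) :
    (∀ t : Fin T, (blk (Mᵀ * L) t).PosDef) ↔ OStar L M = {(1 : Mat d T)} := by
  set A := Mᵀ * L with hAdef
  constructor
  · intro hPD
    have key : ∀ O : Mat d T, memO O →
        (∑ p, ∑ q, ((L - M) p q)^2) ≤ (∑ p, ∑ q, ((L - M*O) p q)^2) ∧
        ((∑ p, ∑ q, ((L - M*O) p q)^2) = (∑ p, ∑ q, ((L - M) p q)^2) → O = 1) := by
      intro O hO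
      have hsq := sq_expand L M O hO.2
      have htb := trace_blocks O A hO.1
      have hterm := fun t => fwd_scalar (hPD t) (blk_mul_self_orth hO t)
      constructor
      · have hnn : 0 ≤ trace ((1-O)ᵀ * A) := by
          rw [htb]; exact Finset.sum_nonneg fun t _ => (hterm t).1
        rw [← hAdef] at hsq
        linarith
      · intro heq
        rw [← hAdef] at hsq
        have hz : trace ((1-O)ᵀ * A) = 0 := by linarith
        rw [htb] at hz
        have hz2 := (Finset.sum_eq_zero_iff_of_nonneg (fun t _ => (hterm t).1)).mp hz
        exact eq_one_of_blocks O hO.1 fun t => (hterm t).2 (hz2 t (Finset.mem_univ t))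
    have keyF : ∀ O : Mat d T, memO O → frobNorm (L - M) ≤ frobNorm (L - M*O) :=
      fun O hO => Real.sqrt_le_sqrt (key O hO).1
    have hinf : dABW L M = frobNorm (L - M) := by
      apply IsLeast.csInf_eq
      constructor
      · exact ⟨1, memO_one, by rw [mul_one]⟩
      · rintro r ⟨O, hO, rfl⟩
        exact keyF O hO
    ext O
    simp only [OStar, Set.mem_setOf_eq, Set.mem_singleton_iff]
    constructor
    · rintro ⟨hO, hfr⟩
      rw [hinf] at hfr
      have hsq : (∑ p, ∑ q, ((L - M*O) p q)^2) = (∑ p, ∑ q, ((L - M) p q)^2) :=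
        (Real.sqrt_inj (sum_sq_nonneg _) (sum_sq_nonneg _)).mp hfr
      exact (key O hO).2 hsq
    · rintro rfl
      exact ⟨memO_one, by rw [mul_one, hinf]⟩
  · intro hset t
    have h1 : (1:Mat d T) ∈ OStar L M := by rw [hset]; rfl
    have hd1 : frobNorm (L - M) = dABW L M := by
      have := h1.2; rwa [mul_one] at this
    have hbdd : BddBelow {r : ℝ | ∃ O : Mat d T, memO O ∧ r = frobNorm (L - M * O)} := by
      refine ⟨0, ?_⟩
      rintro r ⟨O, hO, rfl⟩
      exact Real.sqrt_nonneg _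
    have hle : ∀ O : Mat d T, memO O → frobNorm (L - M) ≤ frobNorm (L - M*O) := by
      intro O hO
      rw [hd1]
      exact csInf_le hbdd ⟨O, hO, rfl⟩
    have huniq : ∀ O : Mat d T, memO O → frobNorm (L - M*O) = frobNorm (L - M) → O = 1 := by
      intro O hO he
      have hmem : O ∈ OStar L M := ⟨hO, by rw [he, hd1]⟩
      rw [hset] at hmem
      exact hmem
    have hSle : ∀ O : Mat d T, memO O →
        (∑ p, ∑ q, ((L - M) p q)^2) ≤ (∑ p, ∑ q, ((L - M*O) p q)^2) := by
      intro O hO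
      have := hle O hO
      exact (Real.sqrt_le_sqrt_iff (sum_sq_nonneg _)).mp this
    have htrQ : ∀ Q : Matrix (Fin d) (Fin d) ℝ, Qᵀ * Q = 1 →
        trace ((1 - embQ t Q)ᵀ * A) = trace ((1 - Q)ᵀ * blk A t) := by
      intro Q hQ
      rw [trace_blocks _ _ (embQ_memO t Q hQ).1]
      rw [Finset.sum_eq_single t]
      · rw [blk_embQ_same]
      · intro s _ hs
        rw [blk_embQ_ne t s Q hs, sub_self]
        simp
      · exact fun h => absurd (Finset.mem_univ t) h
    apply rev_scalar
    · intro Q hQ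
      have hOm := embQ_memO t Q hQ
      have hsq := sq_expand L M (embQ t Q) hOm.2
      rw [← hAdef] at hsq
      have hS := hSle _ hOm
      rw [← htrQ Q hQ]
      linarith
    · intro Q hQ h0
      have hOm := embQ_memO t Q hQ
      have hsq := sq_expand L M (embQ t Q) hOm.2
      rw [← hAdef] at hsq
      rw [← htrQ Q hQ] at h0
      have hSeq : (∑ p, ∑ q, ((L - M * embQ t Q) p q)^2)
          = (∑ p, ∑ q, ((L - M) p q)^2) := by linarith
      have hfr : frobNorm (L - M * embQ t Q) = frobNorm (L - M) := by
        unfold frobNorm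
        rw [hSeq]
      exact embQ_eq_one t Q (huniq _ hOm hfr)
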